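/- Let 0 < max{r₀, r₁} ≤ T with r₀ ≠ r₁. Then ∫ from max{r₀,r₁} to T of t / (√(t² − r₀²)·√(t² − r₁²)) dt = ln(√(T² − r₀²) + √(T² − r₁²)) − (1/2)·ln|r₀² − r₁²|. -/

import Mathlib

open MeasureTheory Real

private lemma integral_sqrt_identity_key (r₀ r₁ T : ℝ) (h₁ : 0 ≤ r₁) (hlt : r₁ < r₀)
    (hT : r₀ ≤ T) :
    ∫ t in r₀..T, t / (Real.sqrt (t ^ 2 - r₀ ^ 2) * Real.sqrt (t ^ 2 - r₁ ^ 2)) =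
      Real.log (Real.sqrt (T ^ 2 - r₀ ^ 2) + Real.sqrt (T ^ 2 - r₁ ^ 2)) -
        (1 / 2) * Real.log (r₀ ^ 2 - r₁ ^ 2) := by
  have hr₀ : 0 < r₀ := lt_of_le_of_lt h₁ hlt
  have hdiff : 0 < r₀ ^ 2 - r₁ ^ 2 := by nlinarith
  have hTpos : 0 < T := lt_of_lt_of_le hr₀ hT
  set F : ℝ → ℝ := fun t =>
    Real.log (Real.sqrt (t ^ 2 - r₀ ^ 2) + Real.sqrt (t ^ 2 - r₁ ^ 2)) with hFdef
  set f : ℝ → ℝ := fun t =>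
    t / (Real.sqrt (t ^ 2 - r₀ ^ 2) * Real.sqrt (t ^ 2 - r₁ ^ 2)) with hfdef
  have hcont : ContinuousOn F (Set.Icc r₀ T) := by
    apply ContinuousOn.log
    · fun_prop
    · intro t ht
      have h2 : 0 < Real.sqrt (t ^ 2 - r₁ ^ 2) := by
        apply Real.sqrt_pos.2
        nlinarith [ht.1]
      positivity
  have hderiv : ∀ x ∈ Set.Ioo r₀ T, HasDerivWithinAt F (f x) (Set.Ioi x) x := by
    intro x hx
    have hx0 : 0 < x ^ 2 - r₀ ^ 2 := by nlinarith [hx.1]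
    have hx1 : 0 < x ^ 2 - r₁ ^ 2 := by nlinarith [hx.1]
    have hu : Real.sqrt (x ^ 2 - r₀ ^ 2) ≠ 0 := by positivity
    have hv : Real.sqrt (x ^ 2 - r₁ ^ 2) ≠ 0 := by positivity
    have hbase : ∀ r : ℝ, HasDerivAt (fun t : ℝ => t ^ 2 - r ^ 2) (2 * x) x := by
      intro r
      simpa using (hasDerivAt_pow 2 x).sub_const (r ^ 2)
    have hdu : HasDerivAt (fun t : ℝ => Real.sqrt (t ^ 2 - r₀ ^ 2))
        (x / Real.sqrt (x ^ 2 - r₀ ^ 2)) x := by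
      have := (Real.hasDerivAt_sqrt (ne_of_gt hx0)).comp x (hbase r₀)
      convert this using 1 <;> try rfl
      field_simp
    have hdv : HasDerivAt (fun t : ℝ => Real.sqrt (t ^ 2 - r₁ ^ 2))
        (x / Real.sqrt (x ^ 2 - r₁ ^ 2)) x := by
      have := (Real.hasDerivAt_sqrt (ne_of_gt hx1)).comp x (hbase r₁)
      convert this using 1 <;> try rfl
      field_simp
    have hsumne : Real.sqrt (x ^ 2 - r₀ ^ 2) + Real.sqrt (x ^ 2 - r₁ ^ 2) ≠ 0 := by
      have := Real.sqrt_pos.2 hx0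
      have := Real.sqrt_pos.2 hx1
      positivity
    have hdF : HasDerivAt F
        ((x / Real.sqrt (x ^ 2 - r₀ ^ 2) + x / Real.sqrt (x ^ 2 - r₁ ^ 2)) /
          (Real.sqrt (x ^ 2 - r₀ ^ 2) + Real.sqrt (x ^ 2 - r₁ ^ 2))) x :=
      (hdu.add hdv).log hsumne
    have heq : (x / Real.sqrt (x ^ 2 - r₀ ^ 2) + x / Real.sqrt (x ^ 2 - r₁ ^ 2)) /
          (Real.sqrt (x ^ 2 - r₀ ^ 2) + Real.sqrt (x ^ 2 - r₁ ^ 2)) = f x := by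
      rw [hfdef]
      field_simp
      ring
    rw [heq] at hdF
    exact hdF.hasDerivWithinAt
  have hint : IntervalIntegrable f volume r₀ T := by
    set C : ℝ := T / (Real.sqrt r₀ * Real.sqrt (r₀ ^ 2 - r₁ ^ 2)) with hCdef
    have hC0 : 0 ≤ C := by positivity
    have hg : IntervalIntegrable (fun t : ℝ => C * (t - r₀) ^ (-(1 / 2) : ℝ))
        volume r₀ T := by
      have h1 : IntervalIntegrable (fun t : ℝ => t ^ (-(1 / 2) : ℝ)) volume 0 (T - r₀) :=
        intervalIntegral.intervalIntegrable_rpow' (by norm_num)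
      have h2 := (h1.comp_sub_right r₀).const_mul C
      simpa using h2
    apply hg.mono_fun'
    · apply Measurable.aestronglyMeasurable
      apply Measurable.div measurable_id
      apply Measurable.mul <;> exact (Real.continuous_sqrt.comp (by fun_prop)).measurable
    · filter_upwards [ae_restrict_mem measurableSet_uIoc] with t ht
      rw [Set.uIoc_of_le hT] at ht
      have htr : r₀ < t := ht.1
      have htT : t ≤ T := ht.2
      have ht0 : 0 < t := lt_trans hr₀ htr
      have hA : 0 < Real.sqrt (t - r₀) := Real.sqrt_pos.2 (by linarith)
      have hB : 0 < Real.sqrt r₀ := Real.sqrt_pos.2 hr₀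
      have hD : 0 < Real.sqrt (r₀ ^ 2 - r₁ ^ 2) := Real.sqrt_pos.2 hdiff
      have h1 : Real.sqrt r₀ * Real.sqrt (t - r₀) ≤ Real.sqrt (t ^ 2 - r₀ ^ 2) := by
        rw [← Real.sqrt_mul hr₀.le]
        apply Real.sqrt_le_sqrt
        nlinarith
      have h2 : Real.sqrt (r₀ ^ 2 - r₁ ^ 2) ≤ Real.sqrt (t ^ 2 - r₁ ^ 2) := by
        apply Real.sqrt_le_sqrt
        nlinarith
      have hdpos : 0 < Real.sqrt r₀ * Real.sqrt (t - r₀) * Real.sqrt (r₀ ^ 2 - r₁ ^ 2) := by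
        positivity
      have hled : Real.sqrt r₀ * Real.sqrt (t - r₀) * Real.sqrt (r₀ ^ 2 - r₁ ^ 2) ≤
          Real.sqrt (t ^ 2 - r₀ ^ 2) * Real.sqrt (t ^ 2 - r₁ ^ 2) := by
        apply mul_le_mul h1 h2 hD.le (Real.sqrt_nonneg _)
      have hfle : f t ≤ T / (Real.sqrt r₀ * Real.sqrt (t - r₀) * Real.sqrt (r₀ ^ 2 - r₁ ^ 2)) := by
        rw [hfdef]
        exact div_le_div₀ hTpos.le htT hdpos hled
      have hrpow : (t - r₀) ^ (-(1 / 2) : ℝ) = (Real.sqrt (t - r₀))⁻¹ := by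
        rw [Real.rpow_neg (by linarith), Real.sqrt_eq_rpow]
      have heqC : T / (Real.sqrt r₀ * Real.sqrt (t - r₀) * Real.sqrt (r₀ ^ 2 - r₁ ^ 2)) =
          C * (t - r₀) ^ (-(1 / 2) : ℝ) := by
        have hA' := hA.ne'
        have hB' := hB.ne'
        have hD' := hD.ne'
        rw [hrpow, hCdef]
        field_simp
      have hf0 : 0 ≤ f t := by
        rw [hfdef]
        positivity
      simp only [Real.norm_eq_abs, abs_of_nonneg hf0]
      calc f t ≤ T / (Real.sqrt r₀ * Real.sqrt (t - r₀) * Real.sqrt (r₀ ^ 2 - r₁ ^ 2)) := hfle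
        _ = C * (t - r₀) ^ (-(1 / 2) : ℝ) := heqC
  have hFTC := intervalIntegral.integral_eq_sub_of_hasDeriv_right_of_le hT hcont hderiv hint
  rw [hfdef] at hFTC
  rw [hFTC, hFdef]
  have hFr₀ : Real.log (Real.sqrt (r₀ ^ 2 - r₀ ^ 2) + Real.sqrt (r₀ ^ 2 - r₁ ^ 2)) =
      (1 / 2) * Real.log (r₀ ^ 2 - r₁ ^ 2) := by
    rw [sub_self, Real.sqrt_zero, zero_add, Real.log_sqrt hdiff.le]
    ring
  simp only [hFr₀]

theorem integral_sqrt_identity (r₀ r₁ T : ℝ) (h₀ : 0 ≤ r₀) (h₁ : 0 ≤ r₁)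
    (hpos : 0 < max r₀ r₁) (hne : r₀ ≠ r₁) (hT : max r₀ r₁ ≤ T) :
    ∫ t in (max r₀ r₁)..T, t / (Real.sqrt (t ^ 2 - r₀ ^ 2) * Real.sqrt (t ^ 2 - r₁ ^ 2)) =
      Real.log (Real.sqrt (T ^ 2 - r₀ ^ 2) + Real.sqrt (T ^ 2 - r₁ ^ 2)) -
        (1 / 2) * Real.log |r₀ ^ 2 - r₁ ^ 2| := by
  rcases lt_or_gt_of_ne hne with h | h
  · -- r₀ < r₁, max = r₁
    have hmax : max r₀ r₁ = r₁ := max_eq_right h.le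
    rw [hmax] at hT ⊢
    have habs : |r₀ ^ 2 - r₁ ^ 2| = r₁ ^ 2 - r₀ ^ 2 := by
      rw [abs_sub_comm, abs_of_pos (by nlinarith)]
    rw [habs]
    have key := integral_sqrt_identity_key r₁ r₀ T h₀ h hT
    simp_rw [mul_comm (Real.sqrt (_ - r₁ ^ 2)) (Real.sqrt (_ - r₀ ^ 2)),
      add_comm (Real.sqrt (T ^ 2 - r₁ ^ 2)) (Real.sqrt (T ^ 2 - r₀ ^ 2))] at key
    exact key
  · -- r₁ < r₀, max = r₀
    have hmax : max r₀ r₁ = r₀ := max_eq_left h.le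
    rw [hmax] at hT ⊢
    have habs : |r₀ ^ 2 - r₁ ^ 2| = r₀ ^ 2 - r₁ ^ 2 := abs_of_pos (by nlinarith)
    rw [habs]
    exact integral_sqrt_identity_key r₀ r₁ T h₁ h hT
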